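/- Let a planar map g be given in polar coordinates by g(ρ,θ) = (C(ρ + μ)^h, D(ρ + μ)) with constants C, D > 0, h > 1 and parameter μ > 0 small. Then for sufficiently small μ, g has a fixed point (ρ_p, θ_p) with ρ_p = C μ^h (1 + o(1)) and the fixed point is unique among small ρ; in particular ρ_p → 0 as μ → 0. -/

import Mathlib

open Filter Topology Set

/-- For the return map g(ρ,θ) = (C(ρ+μ)^h, D(ρ+μ)) with C, D > 0, h > 1 and small
μ > 0, there is a unique small fixed point (ρ_p, θ_p); moreover
ρ_p = Cμ^h(1+o(1)) as μ → 0⁺ (in particular ρ_p → 0). -/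
theorem stmt13 (C D h : ℝ) (hC : 0 < C) (hD : 0 < D) (hh : 1 < h) :
    ∃ δ > (0 : ℝ), ∃ μ₀ > (0 : ℝ), ∃ P : ℝ → ℝ,
      (∀ μ : ℝ, 0 < μ → μ < μ₀ →
        (0 < P μ ∧ P μ < δ ∧
         -- (P μ, D (P μ + μ)) is a fixed point of g
         C * (P μ + μ) ^ h = P μ ∧
         -- uniqueness among small ρ
         (∀ ρ : ℝ, 0 < ρ → ρ < δ → C * (ρ + μ) ^ h = ρ → ρ = P μ))) ∧
      Tendsto (fun μ => P μ / (C * μ ^ h)) (𝓝[>] (0 : ℝ)) (𝓝 1) ∧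
      Tendsto P (𝓝[>] (0 : ℝ)) (𝓝 0) := by
  classical
  have hh0 : (0:ℝ) < h := lt_trans one_pos hh
  have hh1 : (0:ℝ) < h - 1 := by linarith
  -- choose a small radius r with C * h * r^(h-1) < 1/2
  obtain ⟨r, hr0, hrK⟩ : ∃ r : ℝ, 0 < r ∧ C * h * r ^ (h-1) < 1/2 := by
    refine ⟨((2*C*h+1)⁻¹) ^ (h-1)⁻¹, Real.rpow_pos_of_pos (by positivity) _, ?_⟩
    have heq : (((2*C*h+1)⁻¹) ^ (h-1)⁻¹) ^ (h-1) = (2*C*h+1)⁻¹ :=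
      Real.rpow_inv_rpow (by positivity) (ne_of_gt hh1)
    rw [heq]
    have h2 : (0:ℝ) < 2*C*h+1 := by positivity
    have h3 : (2*C*h+1) * (2*C*h+1)⁻¹ = 1 := mul_inv_cancel₀ (ne_of_gt h2)
    nlinarith [inv_pos.mpr h2]
  have hCr1 : C * r ^ (h-1) < 1/2 := by
    nlinarith [Real.rpow_pos_of_pos hr0 (h-1)]
  have hrsplit : r ^ (h-1) * r = r ^ h := by
    have : r ^ (h-1) * r ^ (1:ℝ) = r ^ (h-1+1) := (Real.rpow_add hr0 _ _).symm
    rw [Real.rpow_one] at this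
    rw [this]; norm_num
  have hCrh : C * r ^ h < r/2 := by
    rw [← hrsplit]
    nlinarith [Real.rpow_pos_of_pos hr0 (h-1)]
  -- existence and uniqueness of the fixed point for each small μ
  have key : ∀ μ : ℝ, 0 < μ → μ < r/2 →
      ∃ ρ, (0 < ρ ∧ ρ < r/2 ∧ C*(ρ+μ)^h = ρ) ∧
        ∀ ρ', 0 < ρ' → ρ' < r/2 → C*(ρ'+μ)^h = ρ' → ρ' = ρ := by
    intro μ hμ0 hμr
    set f : ℝ → ℝ := fun ρ => C*(ρ+μ)^h - ρ with hf
    have hcont : ContinuousOn f (Icc 0 (r/2)) := by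
      apply ContinuousOn.sub _ continuousOn_id
      apply ContinuousOn.mul continuousOn_const
      apply ContinuousOn.rpow_const (continuousOn_id.add continuousOn_const)
      intro x hx
      exact Or.inl (by show x + μ ≠ 0; intro hc; nlinarith [hx.1])
    have hanti : StrictAntiOn f (Icc 0 (r/2)) := by
      apply strictAntiOn_of_deriv_neg (convex_Icc _ _) hcont
      intro x hx
      rw [interior_Icc] at hx
      have hx0 : 0 < x + μ := by linarith [hx.1]
      have hder : HasDerivAt f (C*(h*(x+μ)^(h-1)*1) - 1) x := by
        have h1 : HasDerivAt (fun ρ:ℝ => ρ + μ) 1 x := (hasDerivAt_id x).add_const μ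
        have h2 : HasDerivAt (fun ρ:ℝ => (ρ+μ)^h) (h*(x+μ)^(h-1)*1) x :=
          (Real.hasDerivAt_rpow_const (Or.inr hh.le)).comp x h1
        exact (h2.const_mul C).sub (hasDerivAt_id x)
      rw [hder.deriv]
      have hle : (x+μ)^(h-1) ≤ r^(h-1) :=
        Real.rpow_le_rpow hx0.le (by linarith [hx.2]) hh1.le
      nlinarith [mul_le_mul_of_nonneg_left hle (by positivity : (0:ℝ) ≤ C*h)]
    have hf0 : 0 < f 0 := by
      show 0 < C*(0+μ)^h - 0
      rw [zero_add, sub_zero]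
      positivity
    have hfδ : f (r/2) < 0 := by
      show C*(r/2+μ)^h - r/2 < 0
      have h1 : (r/2+μ)^h ≤ r^h := Real.rpow_le_rpow (by linarith) (by linarith) hh0.le
      nlinarith [mul_le_mul_of_nonneg_left h1 hC.le]
    obtain ⟨ρ, hρmem, hρeq⟩ :=
      intermediate_value_Ioo' (by linarith : (0:ℝ) ≤ r/2) hcont ⟨hfδ, hf0⟩
    refine ⟨ρ, ⟨hρmem.1, hρmem.2, sub_eq_zero.mp hρeq⟩, ?_⟩
    intro ρ' h1 h2 h3
    have hfρ' : f ρ' = 0 := by simp [hf, h3]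
    exact hanti.injOn ⟨h1.le, h2.le⟩ ⟨hρmem.1.le, hρmem.2.le⟩ (by rw [hfρ', hρeq])
  set P : ℝ → ℝ := fun μ => if hμ : 0 < μ ∧ μ < r/2 then (key μ hμ.1 hμ.2).choose else 0
    with hPdef
  have hPspec : ∀ μ : ℝ, ∀ (hμ0 : 0 < μ) (hμr : μ < r/2),
      (0 < P μ ∧ P μ < r/2 ∧ C*(P μ+μ)^h = P μ) ∧
      ∀ ρ', 0 < ρ' → ρ' < r/2 → C*(ρ'+μ)^h = ρ' → ρ' = P μ := by
    intro μ hμ0 hμr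
    have hPeq : P μ = (key μ hμ0 hμr).choose := by
      simp only [hPdef]; rw [dif_pos ⟨hμ0, hμr⟩]
    rw [hPeq]
    exact (key μ hμ0 hμr).choose_spec
  -- P μ ≤ μ
  have hPμ : ∀ μ : ℝ, ∀ (hμ0 : 0 < μ) (hμr : μ < r/2), P μ ≤ μ := by
    intro μ hμ0 hμr
    obtain ⟨⟨hP0, hPδ, hPfix⟩, -⟩ := hPspec μ hμ0 hμr
    have hpos : 0 < P μ + μ := by linarith
    have hsplit : (P μ + μ)^(h-1) * (P μ + μ) = (P μ + μ)^h := by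
      have : (P μ + μ)^(h-1) * (P μ + μ)^(1:ℝ) = (P μ + μ)^(h-1+1) :=
        (Real.rpow_add hpos _ _).symm
      rw [Real.rpow_one] at this
      rw [this]; norm_num
    have hle : (P μ + μ)^(h-1) ≤ r^(h-1) :=
      Real.rpow_le_rpow hpos.le (by linarith) hh1.le
    have h1 : C * (P μ + μ)^(h-1) < 1/2 := by
      nlinarith [mul_le_mul_of_nonneg_left hle hC.le]
    have h2 : P μ = C * (P μ + μ)^(h-1) * (P μ + μ) := by
      rw [mul_assoc, hsplit, hPfix]
    nlinarith [mul_le_mul_of_nonneg_right h1.le hpos.le]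
  -- P μ ≤ C * 2^h * μ^h
  have hPub : ∀ μ : ℝ, ∀ (hμ0 : 0 < μ) (hμr : μ < r/2), P μ ≤ C * 2^h * μ^h := by
    intro μ hμ0 hμr
    obtain ⟨⟨hP0, hPδ, hPfix⟩, -⟩ := hPspec μ hμ0 hμr
    have h1 : (P μ + μ)^h ≤ (2*μ)^h :=
      Real.rpow_le_rpow (by linarith) (by linarith [hPμ μ hμ0 hμr]) hh0.le
    have h2 : ((2:ℝ)*μ)^h = 2^h * μ^h := Real.mul_rpow (by norm_num) hμ0.le
    calc P μ = C * (P μ + μ)^h := hPfix.symm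
      _ ≤ C * (2*μ)^h := by nlinarith [mul_le_mul_of_nonneg_left h1 hC.le]
      _ = C * 2^h * μ^h := by rw [h2, mul_assoc]
  -- the ratio identity
  have hratio : ∀ μ : ℝ, ∀ (hμ0 : 0 < μ) (hμr : μ < r/2),
      P μ/(C*μ^h) = (1 + P μ/μ)^h := by
    intro μ hμ0 hμr
    obtain ⟨⟨hP0, hPδ, hPfix⟩, -⟩ := hPspec μ hμ0 hμr
    have hμh : 0 < μ^h := Real.rpow_pos_of_pos hμ0 h
    have h1 : 1 + P μ/μ = (P μ + μ)/μ := by field_simp; ring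
    have h2 : (P μ + μ)^h = P μ / C := by
      rw [eq_div_iff (ne_of_gt hC)]; linarith [hPfix]
    rw [h1, Real.div_rpow (by linarith) hμ0.le, h2, div_div]
  -- eventual bound filter
  have hev : ∀ᶠ μ in 𝓝[>](0:ℝ), 0 < μ ∧ μ < r/2 := by
    filter_upwards [Ioo_mem_nhdsGT_of_mem (⟨le_refl 0, by positivity⟩ : (0:ℝ) ∈ Ico 0 (r/2))]
      with μ hμ
    exact ⟨hμ.1, hμ.2⟩
  -- tendsto of the upper bound
  have hB : Tendsto (fun μ : ℝ => (1 + C*2^h*μ^(h-1))^h) (𝓝[>](0:ℝ)) (𝓝 1) := by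
    have h1 : Tendsto (fun μ:ℝ => μ^(h-1)) (𝓝[>](0:ℝ)) (𝓝 0) := by
      have := (Real.continuousAt_rpow_const 0 (h-1) (Or.inr hh1.le)).tendsto
      rw [Real.zero_rpow (ne_of_gt hh1)] at this
      exact this.mono_left nhdsWithin_le_nhds
    have h2 : Tendsto (fun μ:ℝ => 1 + C*2^h*μ^(h-1)) (𝓝[>](0:ℝ)) (𝓝 1) := by
      have h2' : Tendsto (fun μ:ℝ => 1 + C*2^h*μ^(h-1)) (𝓝[>](0:ℝ)) (𝓝 (1 + C*2^h*0)) :=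
        tendsto_const_nhds.add (tendsto_const_nhds.mul h1)
      simpa using h2'
    have h3 : ContinuousAt (fun x:ℝ => x^h) 1 :=
      Real.continuousAt_rpow_const 1 h (Or.inl one_ne_zero)
    have := h3.tendsto.comp h2
    rw [Real.one_rpow] at this
    exact this
  refine ⟨r/2, by positivity, r/2, by positivity, P, ?_, ?_, ?_⟩
  · intro μ hμ0 hμr
    obtain ⟨⟨hP0, hPδ, hPfix⟩, huniq⟩ := hPspec μ hμ0 hμr
    exact ⟨hP0, hPδ, hPfix, huniq⟩
  · apply tendsto_of_tendsto_of_tendsto_of_le_of_le' tendsto_const_nhds hB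
    · filter_upwards [hev] with μ hμ
      rw [hratio μ hμ.1 hμ.2]
      have h1 : (1:ℝ) = 1^h := (Real.one_rpow h).symm
      rw [h1]
      refine Real.rpow_le_rpow (by norm_num) ?_ hh0.le
      have : 0 < P μ := ((hPspec μ hμ.1 hμ.2).1).1
      have h2 : 0 < P μ/μ := div_pos this hμ.1
      linarith
    · filter_upwards [hev] with μ hμ
      rw [hratio μ hμ.1 hμ.2]
      have hP0 : 0 < P μ := ((hPspec μ hμ.1 hμ.2).1).1
      have hμsplit : μ^(h-1) * μ = μ^h := by
        have : μ^(h-1) * μ^(1:ℝ) = μ^(h-1+1) := (Real.rpow_add hμ.1 _ _).symm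
        rw [Real.rpow_one] at this
        rw [this]; norm_num
      have hb : P μ/μ ≤ C*2^h*μ^(h-1) := by
        rw [div_le_iff₀ hμ.1]
        calc P μ ≤ C * 2^h * μ^h := hPub μ hμ.1 hμ.2
          _ = C*2^h*μ^(h-1) * μ := by rw [mul_assoc (C*2^h), hμsplit]
      have hd : 0 < P μ / μ := div_pos hP0 hμ.1
      refine Real.rpow_le_rpow (by linarith) (by linarith) hh0.le
  · apply tendsto_of_tendsto_of_tendsto_of_le_of_le'
      (tendsto_const_nhds (x := (0:ℝ))) (tendsto_id.mono_right nhdsWithin_le_nhds)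
    · filter_upwards [hev] with μ hμ
      exact (((hPspec μ hμ.1 hμ.2).1).1).le
    · filter_upwards [hev] with μ hμ
      exact hPμ μ hμ.1 hμ.2
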